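/- Let λ ∈ ℝ be irrational and let β > 0 be such that 1, β, λβ are linearly independent over ℚ. Let δ > 0 and η > 0 satisfy 2η + max(1, |λ|)·β < 2δ. Define E = {m ∈ ℕ : ‖β·m‖ < δ and ‖λ·β·m‖ < δ}, B = {n ∈ ℕ : ‖β·n‖ < η and ‖λ·β·n‖ < η}, T = {n ∈ ℕ : ‖β·n^{3/2}‖ < η, ‖λ·β·n^{3/2}‖ < η, and ‖λ²·β·n^{3/2}‖ < η}, f₁(t) = t^{3/2}, and f₂(t) = λ·t^{3/2} + t. Then B ∩ T ⊆ R_{f₁}(E) ∩ R_{f₂}(E). -/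

import Mathlib

open Filter

/-- Distance from a real number to the nearest integer. -/
noncomputable def distNearestInt (x : ℝ) : ℝ := |x - round x|

/-- A set of naturals is thick if it contains arbitrarily long blocks of
consecutive integers. -/
def Thick (S : Set ℕ) : Prop := ∀ L : ℕ, ∃ N : ℕ, ∀ j : ℕ, j ≤ L → N + j ∈ S

/-- A set of naturals is syndetic if it has bounded gaps. -/
def Syndetic (S : Set ℕ) : Prop :=
  ∃ G : ℕ, 0 < G ∧ ∀ a : ℕ, ∃ n ∈ S, a ≤ n ∧ n < a + G

/-- A set is piecewise syndetic if it is the intersection of a thick set and a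
syndetic set. -/
def PiecewiseSyndetic (S : Set ℕ) : Prop :=
  ∃ T B : Set ℕ, Thick T ∧ Syndetic B ∧ S = T ∩ B

open Classical in
/-- The number of elements of `E ∩ {1, …, N}`. -/
noncomputable def countIn (E : Set ℕ) (N : ℕ) : ℕ :=
  ((Finset.Icc 1 N).filter (fun n => n ∈ E)).card

/-- `E` has a natural density that exists and is positive. -/
def PosDensity (E : Set ℕ) : Prop :=
  ∃ d : ℝ, 0 < d ∧
    Tendsto (fun N : ℕ => (countIn E N : ℝ) / (N : ℝ)) atTop (nhds d)

/-- The return-time set `R_u(E) = {n : ∃ m ∈ E, m + u n ∈ E}`. -/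
def retSet (u : ℕ → ℤ) (E : Set ℕ) : Set ℕ :=
  {n : ℕ | ∃ m m' : ℕ, m ∈ E ∧ m' ∈ E ∧ (m' : ℤ) = (m : ℤ) + u n}

/-- The return-time set along the floor of a real-valued function. -/
noncomputable def retSetFloor (f : ℝ → ℝ) (E : Set ℕ) : Set ℕ :=
  retSet (fun n => ⌊f (n : ℝ)⌋) E

/-- The return-time set along the closest integer to a real-valued function. -/
noncomputable def retSetRound (f : ℝ → ℝ) (E : Set ℕ) : Set ℕ :=
  retSet (fun n => round (f (n : ℝ))) E

open Complex Finset



lemma dni_nonneg (x : ℝ) : 0 ≤ distNearestInt x := abs_nonneg _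

lemma dni_le (x : ℝ) (z : ℤ) : distNearestInt x ≤ |x - z| := round_le x z

lemma dni_le_abs (x : ℝ) : distNearestInt x ≤ |x| := by
  simpa using dni_le x 0

lemma dni_neg (x : ℝ) : distNearestInt (-x) = distNearestInt x := by
  have h1 : ∀ y : ℝ, distNearestInt (-y) ≤ distNearestInt y := by
    intro y
    have h := dni_le (-y) (-round y)
    have e : |(-y : ℝ) - ((-round y : ℤ) : ℝ)| = |y - round y| := by
      push_cast
      rw [show (-y : ℝ) - (-(round y : ℝ)) = -(y - round y) by ring, abs_neg]
    rw [e] at h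
    exact h
  refine le_antisymm (h1 x) ?_
  have := h1 (-x)
  rwa [neg_neg] at this

lemma dni_add_int (x : ℝ) (k : ℤ) : distNearestInt (x + k) = distNearestInt x := by
  unfold distNearestInt
  rw [round_add_intCast]
  push_cast
  ring_nf

lemma dni_add_le (x y : ℝ) : distNearestInt (x + y) ≤ distNearestInt x + distNearestInt y := by
  have h := dni_le (x + y) (round x + round y)
  refine h.trans ?_
  unfold distNearestInt
  push_cast
  have : x + y - ((round x : ℝ) + (round y : ℝ)) = (x - round x) + (y - round y) := by ring
  rw [this]
  exact abs_add_le _ _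

noncomputable def ec (t : ℝ) : ℂ := Complex.exp (((2 * Real.pi * t : ℝ) : ℂ) * Complex.I)

lemma ec_add (s t : ℝ) : ec (s + t) = ec s * ec t := by
  unfold ec
  rw [← Complex.exp_add]
  push_cast
  ring_nf

lemma ec_zero : ec 0 = 1 := by simp [ec]

lemma abs_ec (t : ℝ) : ‖ec t‖ = 1 := by
  unfold ec
  rw [Complex.norm_exp, Complex.mul_I_re, Complex.ofReal_im]
  simp

lemma ec_pow (t : ℝ) (n : ℕ) : ec t ^ n = ec (n * t) := by
  induction n with
  | zero => simp [ec_zero]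
  | succ k ih =>
    rw [pow_succ, ih, ← ec_add]
    push_cast
    ring_nf

lemma ec_int (n : ℤ) : ec n = 1 := by
  unfold ec
  rw [show (((2 * Real.pi * (n:ℝ) : ℝ) : ℂ) * Complex.I) = (n:ℤ) * (2 * Real.pi * Complex.I) by push_cast; ring]
  exact Complex.exp_int_mul_two_pi_mul_I n

lemma ec_eq_one_iff (t : ℝ) : ec t = 1 ↔ ∃ n : ℤ, t = n := by
  constructor
  · intro h
    rw [ec, Complex.exp_eq_one_iff] at h
    obtain ⟨n, hn⟩ := h
    refine ⟨n, ?_⟩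
    have hI : (Complex.I : ℂ) ≠ 0 := Complex.I_ne_zero
    have hn' : ((2 * Real.pi * t : ℝ) : ℂ) * Complex.I = ((n : ℂ) * (2 * Real.pi)) * Complex.I := by
      rw [hn]; ring
    have h2 : ((2 * Real.pi * t : ℝ) : ℂ) = (n : ℂ) * (2 * Real.pi) := mul_right_cancel₀ hI hn'
    have h3 : (2 * Real.pi * t : ℝ) = (n : ℝ) * (2 * Real.pi) := by exact_mod_cast h2
    have hπ : (2 * Real.pi : ℝ) ≠ 0 := by positivity
    field_simp at h3
    nlinarith [h3, Real.pi_pos]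
  · rintro ⟨n, rfl⟩
    exact ec_int n

lemma ec_cos_sin (t : ℝ) : ec t = ((Real.cos (2 * Real.pi * t) : ℝ) : ℂ) + ((Real.sin (2 * Real.pi * t) : ℝ) : ℂ) * Complex.I := by
  unfold ec
  rw [Complex.exp_mul_I, ← Complex.ofReal_cos, ← Complex.ofReal_sin]

lemma normSq_one_add_ec (t : ℝ) : Complex.normSq (1 + ec t) = 2 + 2 * Real.cos (2 * Real.pi * t) := by
  have hsc := Real.sin_sq_add_cos_sq (2 * Real.pi * t)
  set c := Real.cos (2 * Real.pi * t) with hc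
  set s := Real.sin (2 * Real.pi * t) with hs
  rw [ec_cos_sin, ← hc, ← hs, Complex.normSq_apply]
  simp only [Complex.add_re, Complex.add_im, Complex.ofReal_re, Complex.ofReal_im,
    Complex.mul_re, Complex.mul_im, Complex.I_re, Complex.I_im, Complex.one_re, Complex.one_im]
  nlinarith [hsc]

lemma one_add_ec_mul (t : ℝ) : (1 + ec t) * (1 + ec (-t)) = ((Complex.normSq (1 + ec t) : ℝ) : ℂ) := by
  have hconj : (starRingEnd ℂ) (1 + ec t) = 1 + ec (-t) := by
    rw [map_add, map_one]
    congr 1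
    unfold ec
    rw [← Complex.exp_conj, map_mul, Complex.conj_ofReal, Complex.conj_I]
    push_cast
    ring_nf
  rw [← hconj, Complex.mul_conj]

lemma binom (u : ℝ) (k : ℕ) :
    (1 + ec u) ^ k = ∑ j ∈ range (k+1), (k.choose j : ℂ) * ec (j * u) := by
  rw [add_comm, add_pow]
  refine Finset.sum_congr rfl fun j hj => ?_
  rw [one_pow, ec_pow]
  ring

def krW (k : ℕ) (q : (ℕ×ℕ)×(ℕ×ℕ)) : ℕ :=
  k.choose q.1.1 * k.choose q.1.2 * k.choose q.2.1 * k.choose q.2.2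

noncomputable def krd1 (q : (ℕ×ℕ)×(ℕ×ℕ)) : ℝ := (q.1.1 : ℝ) - (q.1.2 : ℝ)

noncomputable def krd2 (q : (ℕ×ℕ)×(ℕ×ℕ)) : ℝ := (q.2.1 : ℝ) - (q.2.2 : ℝ)

noncomputable def krQ (k : ℕ) : Finset ((ℕ×ℕ)×(ℕ×ℕ)) :=
  (Finset.range (k+1) ×ˢ Finset.range (k+1)) ×ˢ (Finset.range (k+1) ×ˢ Finset.range (k+1))

lemma expand (β γ x y : ℝ) (k m : ℕ) :
    ((Complex.normSq (1 + ec (β*m - x)) ^ k * Complex.normSq (1 + ec (γ*m - y)) ^ k : ℝ) : ℂ)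
    = ∑ q ∈ krQ k, (krW k q : ℂ) * ec (-(krd1 q * x) - krd2 q * y)
        * (ec (krd1 q * β + krd2 q * γ)) ^ m := by
  push_cast
  set u := β * (m:ℝ) - x with hu
  set v := γ * (m:ℝ) - y with hv
  have pdt :
      ((Complex.normSq (1 + ec u) : ℝ) : ℂ) ^ k * ((Complex.normSq (1 + ec v) : ℝ) : ℂ) ^ k
      = ((1 + ec u)^k * (1 + ec (-u))^k) * ((1 + ec v)^k * (1 + ec (-v))^k) := by
    rw [← one_add_ec_mul, ← one_add_ec_mul, mul_pow, mul_pow]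
  rw [pdt, binom u, binom (-u), binom v, binom (-v)]
  set R := Finset.range (k+1) with hR
  set a : ℕ → ℂ := fun j => (k.choose j : ℂ) * ec (j * u) with ha
  set b : ℕ → ℂ := fun j => (k.choose j : ℂ) * ec (j * (-u)) with hb
  set c : ℕ → ℂ := fun j => (k.choose j : ℂ) * ec (j * v) with hc
  set d : ℕ → ℂ := fun j => (k.choose j : ℂ) * ec (j * (-v)) with hd
  rw [Finset.sum_mul_sum R R a b, Finset.sum_mul_sum R R c d]
  rw [Finset.sum_mul_sum R R _ _]
  have hRHS : ∑ q ∈ krQ k, (krW k q : ℂ) * ec (-(krd1 q * x) - krd2 q * y)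
        * (ec (krd1 q * β + krd2 q * γ)) ^ m
      = ∑ j ∈ R, ∑ l ∈ R, ∑ j' ∈ R, ∑ l' ∈ R,
          (krW k ((j,j'),(l,l')) : ℂ) * ec (-(krd1 ((j,j'),(l,l')) * x) - krd2 ((j,j'),(l,l')) * y)
          * (ec (krd1 ((j,j'),(l,l')) * β + krd2 ((j,j'),(l,l')) * γ)) ^ m := by
    simp only [krQ, Finset.sum_product, ← hR]
    refine Finset.sum_congr rfl fun j hj => ?_
    exact Finset.sum_comm
  rw [hRHS]
  refine Finset.sum_congr rfl fun j hj => ?_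
  refine Finset.sum_congr rfl fun l hl => ?_
  rw [Finset.sum_mul_sum R R _ _]
  refine Finset.sum_congr rfl fun j' hj' => ?_
  refine Finset.sum_congr rfl fun l' hl' => ?_
  simp only [ha, hb, hc, hd, krW, krd1, krd2]
  rw [ec_pow]
  rw [show ((k.choose j : ℂ) * ec (j * u) * ((k.choose j' : ℂ) * ec (j' * (-u)))
      * ((k.choose l : ℂ) * ec (l * v) * ((k.choose l' : ℂ) * ec (l' * (-v)))))
      = ((k.choose j : ℂ) * (k.choose j') * (k.choose l) * (k.choose l'))
        * (ec (j * u) * ec (j' * (-u)) * ec (l * v) * ec (l' * (-v)))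
      from by ring]
  rw [← ec_add, ← ec_add, ← ec_add]
  rw [mul_assoc ((k.choose j * k.choose j' * k.choose l * k.choose l' : ℕ) : ℂ), ← ec_add]
  push_cast
  rw [hu, hv]
  refine congrArg₂ _ (by ring) (congrArg _ (by ring))

lemma geom_bound (z : ℂ) (hz : z ≠ 1) (habs : ‖z‖ = 1) (N : ℕ) :
    ‖∑ m ∈ Finset.range N, z ^ m‖ ≤ 2 / ‖z - 1‖ := by
  rw [geom_sum_eq hz, norm_div]
  have hd : 0 < ‖z - 1‖ := by
    simpa using (norm_pos_iff.mpr (sub_ne_zero.mpr hz))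
  have hnum : ‖z ^ N - 1‖ ≤ 2 := by
    calc ‖z ^ N - 1‖ ≤ ‖z ^ N‖ + ‖(1:ℂ)‖ := by
          exact norm_sub_le _ _
    _ = 2 := by rw [norm_pow, habs]; norm_num
  gcongr

lemma dni_lt_of_cos (t ε : ℝ) (h0 : 0 < ε) (h4 : ε ≤ 1/4)
    (h : Real.cos (2 * Real.pi * ε) < Real.cos (2 * Real.pi * t)) :
    |t - round t| < ε := by
  set s := t - (round t : ℝ) with hs
  have habs2 : |s| ≤ 1/2 := abs_sub_round t
  have hper : Real.cos (2 * Real.pi * t) = Real.cos (2 * Real.pi * s) := by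
    have e : 2 * Real.pi * t = 2 * Real.pi * s + (round t : ℝ) * (2 * Real.pi) := by
      rw [hs]; ring
    rw [e, Real.cos_add_int_mul_two_pi]
  have heven : Real.cos (2 * Real.pi * s) = Real.cos (2 * Real.pi * |s|) := by
    rcases abs_cases s with ⟨h1, _⟩ | ⟨h1, _⟩
    · rw [h1]
    · rw [h1, show 2 * Real.pi * -s = -(2 * Real.pi * s) by ring, Real.cos_neg]
  by_contra hcon
  push_neg at hcon
  have hmono : Real.cos (2 * Real.pi * |s|) ≤ Real.cos (2 * Real.pi * ε) := by
    apply Real.cos_le_cos_of_nonneg_of_le_pi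
    · positivity
    · nlinarith [Real.pi_pos, habs2]
    · nlinarith [Real.pi_pos, hcon]
  rw [hper, heven] at h
  linarith

lemma expandN (β γ x y : ℝ) (k N : ℕ) :
    ((∑ m ∈ Finset.range N,
        Complex.normSq (1 + ec (β*m - x)) ^ k * Complex.normSq (1 + ec (γ*m - y)) ^ k : ℝ) : ℂ)
    = ∑ q ∈ krQ k, (krW k q : ℂ) * ec (-(krd1 q * x) - krd2 q * y)
        * ∑ m ∈ Finset.range N, (ec (krd1 q * β + krd2 q * γ)) ^ m := by
  rw [Complex.ofReal_sum]
  rw [Finset.sum_congr rfl (fun m _ => expand β γ x y k m)]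
  rw [Finset.sum_comm]
  exact Finset.sum_congr rfl fun q _ => by rw [Finset.mul_sum]

set_option maxHeartbeats 1000000 in
theorem kron (β γ : ℝ)
    (hind : ∀ p q r : ℤ, (p:ℝ) * β + (q:ℝ) * γ = (r:ℝ) → p = 0 ∧ q = 0)
    (x y ε : ℝ) (hε : 0 < ε) :
    ∃ m : ℕ, distNearestInt (β * m - x) < ε ∧ distNearestInt (γ * m - y) < ε := by
  set ε' : ℝ := min ε (1/4) with hε'def
  have hε'0 : 0 < ε' := lt_min hε (by norm_num)
  have hε'4 : ε' ≤ 1/4 := min_le_right _ _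
  have hπ := Real.pi_pos
  have hcos1 : Real.cos (2 * Real.pi * ε') < 1 := by
    have h := Real.cos_lt_cos_of_nonneg_of_le_pi (x := 0) (y := 2 * Real.pi * ε')
      le_rfl (by nlinarith) (by positivity)
    simpa using h
  have hcos0 : 0 ≤ Real.cos (2 * Real.pi * ε') := by
    apply Real.cos_nonneg_of_mem_Icc
    constructor <;> nlinarith
  set ρ : ℝ := 2 * (1 - Real.cos (2 * Real.pi * ε')) with hρdef
  have hρ0 : 0 < ρ := by simp only [hρdef]; nlinarith
  have hρ2 : ρ ≤ 2 := by simp only [hρdef]; nlinarith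
  -- choose k
  obtain ⟨k, hk⟩ : ∃ k : ℕ, ((k:ℝ)+1)^4 * ((16 - 4*ρ)/16)^k + ((k:ℝ)+1)^4 * (1/16)^k < 1 := by
    have hr1nn : (0:ℝ) ≤ (16 - 4*ρ)/16 := by nlinarith
    have hr1lt : ((16 - 4*ρ)/16 : ℝ) < 1 := by nlinarith
    have hr1pos : (0:ℝ) < (16 - 4*ρ)/16 := by nlinarith
    have habs1 : |((16 - 4*ρ)/16 : ℝ)| < 1 := by rw [_root_.abs_of_nonneg hr1nn]; exact hr1lt
    have habs2 : |(1/16 : ℝ)| < 1 := by rw [_root_.abs_of_nonneg (by norm_num : (0:ℝ) ≤ 1/16)]; norm_num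
    have shift : ∀ r : ℝ, 0 < r → |r| < 1 →
        Filter.Tendsto (fun n : ℕ => ((n:ℝ)+1)^4 * r^n) Filter.atTop (nhds 0) := by
      intro r hrpos hrabs
      have t1 := tendsto_pow_const_mul_const_pow_of_abs_lt_one 4 hrabs
      have t2 := t1.comp (Filter.tendsto_add_atTop_nat 1)
      have t3 := t2.const_mul (1/r)
      rw [mul_zero] at t3
      convert t3 using 2 with n
      have : ((n + 1 : ℕ) : ℝ) = (n:ℝ) + 1 := by push_cast; ring
      simp only [Function.comp]
      rw [this, pow_succ]
      field_simp
      ring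
    have hsum := (shift _ hr1pos habs1).add (shift _ (by norm_num) habs2)
    rw [add_zero] at hsum
    exact (hsum.eventually (gt_mem_nhds one_pos)).exists
  -- diagonal weight bound
  set C0 : ℕ := k.choose (k/2) with hC0def
  have hC0 : (2:ℝ)^k ≤ ((k:ℝ)+1) * C0 := by
    have h1 : (2:ℕ)^k ≤ (k+1) * C0 := by
      calc (2:ℕ)^k = ∑ j ∈ Finset.range (k+1), k.choose j := (Nat.sum_range_choose k).symm
      _ ≤ (Finset.range (k+1)).card • C0 :=
          Finset.sum_le_card_nsmul _ _ _ (fun j _ => Nat.choose_le_middle j k)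
      _ = (k+1) * C0 := by rw [Finset.card_range]; rfl
    exact_mod_cast h1
  have hW0 : ((16:ℝ))^k / ((k:ℝ)+1)^4 ≤ ((C0:ℝ))^4 := by
    have hk1 : (0:ℝ) < (k:ℝ)+1 := by positivity
    have hC0' : (2:ℝ)^k / ((k:ℝ)+1) ≤ (C0:ℝ) := by
      rw [div_le_iff₀ hk1]; linarith
    calc ((16:ℝ))^k / ((k:ℝ)+1)^4 = ((2:ℝ)^k / ((k:ℝ)+1))^4 := by
          rw [div_pow, ← pow_mul, show k*4 = 4*k from by ring, pow_mul]; norm_num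
    _ ≤ ((C0:ℝ))^4 := by
          apply pow_le_pow_left₀ (by positivity) hC0'
  have hkey : ((16 - 4*ρ):ℝ)^k + 1 < ((C0:ℝ))^4 := by
    have h16 : (0:ℝ) < (16:ℝ)^k := by positivity
    have hk1 : (0:ℝ) < ((k:ℝ)+1)^4 := by positivity
    have e1 : ((16 - 4*ρ)/16)^k = (16 - 4*ρ)^k / 16^k := div_pow _ _ _
    have e2 : ((1:ℝ)/16)^k = 1 / 16^k := by rw [div_pow, one_pow]
    rw [e1, e2] at hk
    have h3 : ((k:ℝ)+1)^4 * ((16 - 4*ρ)^k + 1) < 16^k := by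
      have := mul_lt_mul_of_pos_right hk h16
      calc ((k:ℝ)+1)^4 * ((16 - 4*ρ)^k + 1)
          = (((k:ℝ)+1)^4 * ((16 - 4*ρ)^k / 16^k) + ((k:ℝ)+1)^4 * (1 / 16^k)) * 16^k := by
            field_simp
      _ < 1 * 16^k := this
      _ = 16^k := one_mul _
    have h4 : ((16 - 4*ρ):ℝ)^k + 1 < 16^k / ((k:ℝ)+1)^4 := by
      rw [lt_div_iff₀ hk1]; linarith [h3]
    linarith [hW0]
  classical
  set ω : ((ℕ×ℕ)×(ℕ×ℕ)) → ℝ := fun q => krd1 q * β + krd2 q * γ with hω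
  have hoff : ∀ q : (ℕ×ℕ)×(ℕ×ℕ), ¬(q.1.1 = q.1.2 ∧ q.2.1 = q.2.2) → ec (ω q) ≠ 1 := by
    intro q hne h1
    rw [ec_eq_one_iff] at h1
    obtain ⟨n, hn⟩ := h1
    have hsum : (((q.1.1:ℤ) - q.1.2 : ℤ):ℝ) * β + (((q.2.1:ℤ) - q.2.2 : ℤ):ℝ) * γ = (n:ℝ) := by
      push_cast
      rw [← hn, hω]
      simp only [krd1, krd2]
      try push_cast
      try ring
    obtain ⟨h01, h02⟩ := hind _ _ n hsum
    apply hne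
    constructor
    · have := sub_eq_zero.mp h01; exact_mod_cast this
    · have := sub_eq_zero.mp h02; exact_mod_cast this
  set CB : ℝ := ∑ q ∈ (krQ k).filter (fun q => ¬(q.1.1 = q.1.2 ∧ q.2.1 = q.2.2)),
      (krW k q : ℝ) * (2 / ‖ec (ω q) - 1‖) with hCBdef
  have hCB0 : 0 ≤ CB := Finset.sum_nonneg (fun q _ => by positivity)
  set N : ℕ := max 1 ⌈CB⌉₊ with hNdef
  have hN0 : 0 < N := lt_of_lt_of_le one_pos (le_max_left _ _)
  have hNCB : CB ≤ (N:ℝ) := by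
    refine (Nat.le_ceil CB).trans ?_
    exact_mod_cast Nat.cast_le.mpr (le_max_right 1 _)
  set p : ℕ → ℝ := fun m =>
    Complex.normSq (1 + ec (β*m - x)) ^ k * Complex.normSq (1 + ec (γ*m - y)) ^ k with hpdef
  have hS : ∑ m ∈ Finset.range N, p m = ∑ q ∈ krQ k,
      ((krW k q : ℂ) * ec (-(krd1 q * x) - krd2 q * y) * ∑ m ∈ Finset.range N, (ec (ω q)) ^ m).re := by
    have h := expandN β γ x y k N
    have h2 := congrArg Complex.re h
    rw [Complex.ofReal_re, Complex.re_sum] at h2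
    exact h2
  have hGdiag : ∀ q ∈ (krQ k).filter (fun q => q.1.1 = q.1.2 ∧ q.2.1 = q.2.2),
      ((krW k q : ℂ) * ec (-(krd1 q * x) - krd2 q * y) * ∑ m ∈ Finset.range N, (ec (ω q)) ^ m).re
      = (krW k q : ℝ) * N := by
    intro q hq
    obtain ⟨hq1, hq2⟩ := (Finset.mem_filter.mp hq).2
    have hd1 : krd1 q = 0 := by simp [krd1, hq1]
    have hd2 : krd2 q = 0 := by simp [krd2, hq2]
    rw [hω]
    simp only [hd1, hd2, zero_mul, neg_zero, sub_zero, zero_add, ec_zero, one_pow, mul_one,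
      Finset.sum_const, Finset.card_range, nsmul_eq_mul]
    rw [show ((krW k q : ℂ) * ((N:ℕ):ℂ)) = (((krW k q * N : ℕ):ℕ):ℂ) by push_cast; ring]
    rw [Complex.natCast_re]
    push_cast
    ring
  have hq0mem : (((k/2, k/2), (k/2, k/2)) : (ℕ×ℕ)×(ℕ×ℕ)) ∈
      (krQ k).filter (fun q => q.1.1 = q.1.2 ∧ q.2.1 = q.2.2) := by
    have hlt : k/2 < k + 1 := Nat.lt_succ_of_le (Nat.div_le_self k 2)
    simp [krQ, Finset.mem_filter, Finset.mem_product, hlt]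
  have hdiag_ge : ((C0:ℝ))^4 * N ≤ ∑ q ∈ (krQ k).filter (fun q => q.1.1 = q.1.2 ∧ q.2.1 = q.2.2),
      ((krW k q : ℂ) * ec (-(krd1 q * x) - krd2 q * y) * ∑ m ∈ Finset.range N, (ec (ω q)) ^ m).re := by
    rw [Finset.sum_congr rfl hGdiag]
    have hsingle := Finset.single_le_sum (f := fun q : (ℕ×ℕ)×(ℕ×ℕ) => (krW k q : ℝ) * N)
      (fun q _ => by positivity) hq0mem
    refine le_trans (le_of_eq ?_) hsingle
    simp only [krW, hC0def]
    push_cast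
    ring
  have hoffb : ∀ q ∈ (krQ k).filter (fun q => ¬(q.1.1 = q.1.2 ∧ q.2.1 = q.2.2)),
      -((krW k q : ℝ) * (2 / ‖ec (ω q) - 1‖)) ≤
      ((krW k q : ℂ) * ec (-(krd1 q * x) - krd2 q * y) * ∑ m ∈ Finset.range N, (ec (ω q)) ^ m).re := by
    intro q hq
    have hne := hoff q (Finset.mem_filter.mp hq).2
    have h1 : |((krW k q : ℂ) * ec (-(krd1 q * x) - krd2 q * y) * ∑ m ∈ Finset.range N, (ec (ω q)) ^ m).re|
        ≤ (krW k q : ℝ) * (2 / ‖ec (ω q) - 1‖) := by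
      refine (Complex.abs_re_le_norm _).trans ?_
      rw [norm_mul, norm_mul, Complex.norm_natCast, abs_ec, mul_one]
      exact mul_le_mul_of_nonneg_left (geom_bound _ hne (abs_ec _) N) (by positivity)
    linarith [neg_abs_le (((krW k q : ℂ) * ec (-(krd1 q * x) - krd2 q * y) * ∑ m ∈ Finset.range N, (ec (ω q)) ^ m).re)]
  have hoff_ge : -CB ≤ ∑ q ∈ (krQ k).filter (fun q => ¬(q.1.1 = q.1.2 ∧ q.2.1 = q.2.2)),
      ((krW k q : ℂ) * ec (-(krd1 q * x) - krd2 q * y) * ∑ m ∈ Finset.range N, (ec (ω q)) ^ m).re := by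
    rw [hCBdef, ← Finset.sum_neg_distrib]
    exact Finset.sum_le_sum hoffb
  have hlow : ((C0:ℝ)^4 - 1) * N ≤ ∑ m ∈ Finset.range N, p m := by
    rw [hS, ← Finset.sum_filter_add_sum_filter_not (krQ k) (fun q => q.1.1 = q.1.2 ∧ q.2.1 = q.2.2)]
    have hN' : (1:ℝ) ≤ N := by exact_mod_cast hN0
    nlinarith [hdiag_ge, hoff_ge, hNCB]
  have hex : ∃ m ∈ Finset.range N, ((C0:ℝ)^4 - 1) ≤ p m := by
    by_contra hcon
    push_neg at hcon
    have hne : (Finset.range N).Nonempty := by rw [Finset.nonempty_range_iff]; omega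
    have hlt := Finset.sum_lt_sum_of_nonempty hne hcon
    rw [Finset.sum_const, Finset.card_range, nsmul_eq_mul] at hlt
    nlinarith [hlow, hlt]
  obtain ⟨m, hm, hpm⟩ := hex
  have hA0 : 0 ≤ Complex.normSq (1 + ec (β*m - x)) := Complex.normSq_nonneg _
  have hB0 : 0 ≤ Complex.normSq (1 + ec (γ*m - y)) := Complex.normSq_nonneg _
  have habs4 : ∀ t : ℝ, Complex.normSq (1 + ec t) ≤ 4 := by
    intro t
    rw [Complex.normSq_eq_norm_sq]
    have h2 : ‖1 + ec t‖ ≤ 2 := by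
      calc ‖1 + ec t‖ ≤ ‖(1:ℂ)‖ + ‖ec t‖ := norm_add_le _ _
      _ = 2 := by rw [norm_one, abs_ec]; norm_num
    nlinarith [norm_nonneg (1 + ec t)]
  have hA4 := habs4 (β*m - x)
  have hB4 := habs4 (γ*m - y)
  have h16k : ((16 - 4*ρ):ℝ)^k < p m := lt_of_lt_of_le (by linarith [hkey]) hpm
  have hρ4 : (0:ℝ) ≤ 4 - ρ := by linarith
  have key : ∀ u v : ℝ, p m = Complex.normSq (1 + ec u) ^ k * Complex.normSq (1 + ec v) ^ k →
      4 - ρ < Complex.normSq (1 + ec u) := by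
    intro u v hpuv
    by_contra hcon
    push_neg at hcon
    have hu0 : 0 ≤ Complex.normSq (1 + ec u) := Complex.normSq_nonneg _
    have hv0 : 0 ≤ Complex.normSq (1 + ec v) := Complex.normSq_nonneg _
    have hple : p m ≤ (16 - 4*ρ)^k := by
      rw [hpuv]
      calc Complex.normSq (1 + ec u) ^ k * Complex.normSq (1 + ec v) ^ k
          ≤ (4-ρ)^k * 4^k :=
            mul_le_mul (pow_le_pow_left₀ hu0 hcon k) (pow_le_pow_left₀ hv0 (habs4 v) k)
              (by positivity) (by positivity)
      _ = ((4-ρ)*4)^k := (mul_pow _ _ k).symm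
      _ = (16 - 4*ρ)^k := by ring_nf
    linarith
  have hA : 4 - ρ < Complex.normSq (1 + ec (β*m - x)) := key _ _ rfl
  have hB : 4 - ρ < Complex.normSq (1 + ec (γ*m - y)) := key (γ*m - y) (β*m - x) (by rw [hpdef]; ring)
  have final : ∀ u : ℝ, 4 - ρ < Complex.normSq (1 + ec u) → distNearestInt u < ε := by
    intro u hu
    have hnse := normSq_one_add_ec u
    have hcosu : Real.cos (2*Real.pi*ε') < Real.cos (2*Real.pi*u) := by
      rw [hρdef] at hu
      nlinarith [hu, hnse]
    have := dni_lt_of_cos u ε' hε'0 hε'4 hcosu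
    calc distNearestInt u = |u - round u| := rfl
    _ < ε' := this
    _ ≤ ε := min_le_left _ _
  exact ⟨m, final _ hA, final _ hB⟩

lemma kron_ge (β γ : ℝ)
    (hind : ∀ p q r : ℤ, (p:ℝ) * β + (q:ℝ) * γ = (r:ℝ) → p = 0 ∧ q = 0)
    (x y ε : ℝ) (hε : 0 < ε) (M₀ : ℕ) :
    ∃ m : ℕ, M₀ ≤ m ∧ distNearestInt (β * m - x) < ε ∧ distNearestInt (γ * m - y) < ε := by
  obtain ⟨m₀, h1, h2⟩ := kron β γ hind (x - β*M₀) (y - γ*M₀) ε hε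
  refine ⟨m₀ + M₀, le_add_self, ?_, ?_⟩
  · have e : β * ((m₀ + M₀ : ℕ):ℝ) - x = β * m₀ - (x - β*M₀) := by push_cast; ring
    rw [e]; exact h1
  · have e : γ * ((m₀ + M₀ : ℕ):ℝ) - y = γ * m₀ - (y - γ*M₀) := by push_cast; ring
    rw [e]; exact h2

lemma ret_step (β lam δ ε : ℝ) (hε : 0 < ε)
    (hind : ∀ p q r : ℤ, (p:ℝ) * β + (q:ℝ) * (lam * β) = (r:ℝ) → p = 0 ∧ q = 0)
    (K : ℤ)
    (hC : distNearestInt (β * K) < 2*(δ - ε))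
    (hD : distNearestInt (lam * β * K) < 2*(δ - ε)) :
    ∃ m m' : ℕ, (distNearestInt (β * m) < δ ∧ distNearestInt (lam * β * m) < δ)
      ∧ (distNearestInt (β * m') < δ ∧ distNearestInt (lam * β * m') < δ)
      ∧ (m' : ℤ) = (m : ℤ) + K := by
  set c : ℝ := β * K - round (β * K) with hc
  set d : ℝ := lam * β * K - round (lam * β * K) with hd
  have hcabs : |c| < 2*(δ - ε) := hC
  have hdabs : |d| < 2*(δ - ε) := hD
  obtain ⟨m, hmge, h1, h2⟩ := kron_ge β (lam*β) hind (-(c/2)) (-(d/2)) ε hε (Int.toNat (-K))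
  have hKm : 0 ≤ (m:ℤ) + K := by
    have h3 : (-K) ≤ ((Int.toNat (-K) : ℕ) : ℤ) := Int.self_le_toNat _
    have h4 : ((Int.toNat (-K) : ℕ) : ℤ) ≤ (m:ℤ) := by exact_mod_cast hmge
    omega
  have h1' : distNearestInt (β * m + c/2) < ε := by
    have e : β * (m:ℝ) - (-(c/2)) = β * m + c/2 := by ring
    rw [e] at h1; exact h1
  have h2' : distNearestInt (lam * β * m + d/2) < ε := by
    have e : lam * β * (m:ℝ) - (-(d/2)) = lam * β * m + d/2 := by ring
    rw [e] at h2; exact h2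
  have hhalf : distNearestInt (-(c/2)) ≤ |c|/2 := by
    refine (dni_le_abs _).trans ?_
    rw [abs_neg, abs_div]
    simp [abs_of_nonneg]
  have hhalf' : distNearestInt (c/2) ≤ |c|/2 := by
    refine (dni_le_abs _).trans (le_of_eq ?_)
    rw [abs_div]; norm_num
  have hhalfd : distNearestInt (-(d/2)) ≤ |d|/2 := by
    refine (dni_le_abs _).trans ?_
    rw [abs_neg, abs_div]
    simp [abs_of_nonneg]
  have hhalfd' : distNearestInt (d/2) ≤ |d|/2 := by
    refine (dni_le_abs _).trans (le_of_eq ?_)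
    rw [abs_div]; norm_num
  refine ⟨m, ((m:ℤ) + K).toNat, ⟨?_, ?_⟩, ⟨?_, ?_⟩, by rw [Int.toNat_of_nonneg hKm]⟩
  · have e : β * (m:ℝ) = (β * m + c/2) + (-(c/2)) := by ring
    rw [e]
    calc distNearestInt ((β * m + c/2) + (-(c/2)))
        ≤ distNearestInt (β * m + c/2) + distNearestInt (-(c/2)) := dni_add_le _ _
    _ < ε + |c|/2 := by linarith [h1', hhalf]
    _ ≤ ε + (δ - ε) := by linarith [hcabs]
    _ = δ := by ring
  · have e : lam * β * (m:ℝ) = (lam * β * m + d/2) + (-(d/2)) := by ring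
    rw [e]
    calc distNearestInt ((lam * β * m + d/2) + (-(d/2)))
        ≤ distNearestInt (lam * β * m + d/2) + distNearestInt (-(d/2)) := dni_add_le _ _
    _ < ε + |d|/2 := by linarith [h2', hhalfd]
    _ ≤ ε + (δ - ε) := by linarith [hdabs]
    _ = δ := by ring
  · have ecast : ((((m:ℤ) + K).toNat : ℕ) : ℝ) = (m:ℝ) + (K:ℝ) := by
      have h5 := Int.toNat_of_nonneg hKm
      exact_mod_cast congrArg (fun z : ℤ => (z:ℝ)) h5
    rw [ecast]
    have e : β * ((m:ℝ) + (K:ℝ)) = ((β * m + c/2) + c/2) + (round (β * K) : ℤ) := by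
      rw [hc]; push_cast; ring
    rw [e, dni_add_int]
    calc distNearestInt ((β * m + c/2) + c/2)
        ≤ distNearestInt (β * m + c/2) + distNearestInt (c/2) := dni_add_le _ _
    _ < ε + |c|/2 := by linarith [h1', hhalf']
    _ ≤ ε + (δ - ε) := by linarith [hcabs]
    _ = δ := by ring
  · have ecast : ((((m:ℤ) + K).toNat : ℕ) : ℝ) = (m:ℝ) + (K:ℝ) := by
      have h5 := Int.toNat_of_nonneg hKm
      exact_mod_cast congrArg (fun z : ℤ => (z:ℝ)) h5
    rw [ecast]
    have e : lam * β * ((m:ℝ) + (K:ℝ)) = ((lam * β * m + d/2) + d/2) + (round (lam * β * K) : ℤ) := by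
      rw [hd]; push_cast; ring
    rw [e, dni_add_int]
    calc distNearestInt ((lam * β * m + d/2) + d/2)
        ≤ distNearestInt (lam * β * m + d/2) + distNearestInt (d/2) := dni_add_le _ _
    _ < ε + |d|/2 := by linarith [h2', hhalfd']
    _ ≤ ε + (δ - ε) := by linarith [hdabs]
    _ = δ := by ring

set_option maxHeartbeats 2000000 in
/-- The piecewise-syndeticity inclusion in the proof of Theorem 1.4(ii):
B ∩ T ⊆ R_{f₁}(E) ∩ R_{f₂}(E). -/
theorem stmt_17 (lam β : ℝ) (hlam : Irrational lam) (hβ0 : 0 < β)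
    (hind : ∀ a b c : ℚ, (a : ℝ) + (b : ℝ) * β + (c : ℝ) * (lam * β) = 0 →
      a = 0 ∧ b = 0 ∧ c = 0)
    (δ η : ℝ) (hδ : 0 < δ) (hη : 0 < η)
    (hηβδ : 2 * η + max 1 |lam| * β < 2 * δ)
    (E B T : Set ℕ)
    (hE : E = {m : ℕ | distNearestInt (β * (m : ℝ)) < δ ∧
      distNearestInt (lam * β * (m : ℝ)) < δ})
    (hB : B = {n : ℕ | distNearestInt (β * (n : ℝ)) < η ∧
      distNearestInt (lam * β * (n : ℝ)) < η})
    (hT : T = {n : ℕ | distNearestInt (β * (n : ℝ) ^ ((3 : ℝ) / 2)) < η ∧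
      distNearestInt (lam * β * (n : ℝ) ^ ((3 : ℝ) / 2)) < η ∧
      distNearestInt (lam ^ 2 * β * (n : ℝ) ^ ((3 : ℝ) / 2)) < η}) :
    B ∩ T ⊆ retSetFloor (fun t => t ^ ((3 : ℝ) / 2)) E ∩
      retSetFloor (fun t => lam * t ^ ((3 : ℝ) / 2) + t) E := by
  -- integer-coefficient independence
  have hindZ : ∀ p q r : ℤ, (p:ℝ) * β + (q:ℝ) * (lam * β) = (r:ℝ) → p = 0 ∧ q = 0 := by
    intro p q r h
    have h0 : ((-(r:ℚ) : ℚ) : ℝ) + ((p:ℚ) : ℝ) * β + ((q:ℚ) : ℝ) * (lam * β) = 0 := by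
      push_cast
      linarith [h]
    obtain ⟨_, hp, hq⟩ := hind _ _ _ h0
    constructor
    · exact_mod_cast hp
    · exact_mod_cast hq
  set M : ℝ := max 1 |lam| with hM
  have hM1 : (1:ℝ) ≤ M := le_max_left _ _
  have hMlam : |lam| ≤ M := le_max_right _ _
  have hllam : lam ≤ |lam| := le_abs_self lam
  have hllam' : -|lam| ≤ lam := neg_abs_le lam
  set ε : ℝ := δ - η - M * β / 2 with hεdef
  have hε0 : 0 < ε := by rw [hεdef]; nlinarith [hηβδ]
  have h2δε : 2 * (δ - ε) = 2 * η + M * β := by rw [hεdef]; ring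
  intro n hn
  obtain ⟨hnB, hnT⟩ := hn
  rw [hB, Set.mem_setOf_eq] at hnB
  rw [hT, Set.mem_setOf_eq] at hnT
  obtain ⟨hb1, hb2⟩ := hnB
  obtain ⟨ht1, ht2, ht3⟩ := hnT
  set α : ℝ := (n : ℝ) ^ ((3 : ℝ) / 2) with hα
  -- generic E-producer
  have main : ∀ K : ℤ, distNearestInt (β * K) < 2 * (δ - ε) →
      distNearestInt (lam * β * K) < 2 * (δ - ε) →
      ∃ m m' : ℕ, m ∈ E ∧ m' ∈ E ∧ (m' : ℤ) = (m : ℤ) + K := by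
    intro K hCK hDK
    obtain ⟨m, m', hm, hm', heq⟩ := ret_step β lam δ ε hε0 hindZ K hCK hDK
    refine ⟨m, m', ?_, ?_, heq⟩
    · rw [hE, Set.mem_setOf_eq]; exact hm
    · rw [hE, Set.mem_setOf_eq]; exact hm'
  constructor
  · -- f₁ = t ^ (3/2)
    set K : ℤ := ⌊α⌋ with hK
    have hfr0 : 0 ≤ Int.fract α := Int.fract_nonneg α
    have hfr1 : Int.fract α < 1 := Int.fract_lt_one α
    have hKα : (K : ℝ) = α - Int.fract α := by rw [hK, Int.fract]; ring
    have hCK : distNearestInt (β * K) < 2 * (δ - ε) := by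
      have e : β * (K:ℝ) = β * α + (-(β * Int.fract α)) := by rw [hKα]; ring
      rw [e]
      calc distNearestInt (β * α + (-(β * Int.fract α)))
          ≤ distNearestInt (β * α) + distNearestInt (-(β * Int.fract α)) := dni_add_le _ _
      _ ≤ distNearestInt (β * α) + |β * Int.fract α| := by linarith [dni_le_abs (-(β * Int.fract α)), dni_neg (β * Int.fract α), (abs_neg (β * Int.fract α)).symm, dni_le_abs (β * Int.fract α)]
      _ < η + β := by
            have : |β * Int.fract α| < β := by
              rw [_root_.abs_of_nonneg (by positivity)]
              nlinarith
            linarith [ht1]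
      _ ≤ 2 * (δ - ε) := by rw [h2δε]; nlinarith
    have hDK : distNearestInt (lam * β * K) < 2 * (δ - ε) := by
      have e : lam * β * (K:ℝ) = lam * β * α + (-(lam * β * Int.fract α)) := by rw [hKα]; ring
      rw [e]
      calc distNearestInt (lam * β * α + (-(lam * β * Int.fract α)))
          ≤ distNearestInt (lam * β * α) + distNearestInt (-(lam * β * Int.fract α)) := dni_add_le _ _
      _ ≤ distNearestInt (lam * β * α) + |lam * β * Int.fract α| := by
            rw [dni_neg]
            linarith [dni_le_abs (lam * β * Int.fract α)]
      _ < η + M * β := by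
            have : |lam * β * Int.fract α| ≤ M * β := by
              rw [abs_mul, abs_mul, _root_.abs_of_nonneg hβ0.le, _root_.abs_of_nonneg hfr0]
              have h6 : |lam| * β ≤ M * β := mul_le_mul_of_nonneg_right hMlam hβ0.le
              have h7 : |lam| * β * Int.fract α ≤ M * β * Int.fract α :=
                mul_le_mul_of_nonneg_right h6 hfr0
              have h8 : M * β * Int.fract α ≤ M * β * 1 :=
                mul_le_mul_of_nonneg_left hfr1.le (by positivity)
              linarith
            linarith [ht2]
      _ ≤ 2 * (δ - ε) := by rw [h2δε]; nlinarith
    obtain ⟨m, m', hm, hm', heq⟩ := main K hCK hDK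
    exact ⟨m, m', hm, hm', heq⟩
  · -- f₂ = lam * t^(3/2) + t
    set g : ℝ := lam * α + (n:ℝ) with hg
    set K : ℤ := ⌊g⌋ with hK
    have hfr0 : 0 ≤ Int.fract g := Int.fract_nonneg g
    have hfr1 : Int.fract g < 1 := Int.fract_lt_one g
    have hKg : (K : ℝ) = lam * α + (n:ℝ) - Int.fract g := by rw [hK, Int.fract, hg]; ring
    have hCK : distNearestInt (β * K) < 2 * (δ - ε) := by
      have e : β * (K:ℝ) = lam * β * α + (β * (n:ℝ) + (-(β * Int.fract g))) := by rw [hKg]; ring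
      rw [e]
      calc distNearestInt (lam * β * α + (β * (n:ℝ) + (-(β * Int.fract g))))
          ≤ distNearestInt (lam * β * α) + distNearestInt (β * (n:ℝ) + (-(β * Int.fract g))) := dni_add_le _ _
      _ ≤ distNearestInt (lam * β * α) + (distNearestInt (β * (n:ℝ)) + distNearestInt (-(β * Int.fract g))) := by
            linarith [dni_add_le (β * (n:ℝ)) (-(β * Int.fract g))]
      _ < η + (η + β) := by
            have h5 : distNearestInt (-(β * Int.fract g)) ≤ β := by
              rw [dni_neg]
              refine (dni_le_abs _).trans ?_
              rw [_root_.abs_of_nonneg (by positivity)]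
              nlinarith
            linarith [ht2, hb1]
      _ ≤ 2 * (δ - ε) := by rw [h2δε]; nlinarith
    have hDK : distNearestInt (lam * β * K) < 2 * (δ - ε) := by
      have e : lam * β * (K:ℝ) = lam^2 * β * α + (lam * β * (n:ℝ) + (-(lam * β * Int.fract g))) := by
        rw [hKg]; ring
      rw [e]
      calc distNearestInt (lam^2 * β * α + (lam * β * (n:ℝ) + (-(lam * β * Int.fract g))))
          ≤ distNearestInt (lam^2 * β * α) + distNearestInt (lam * β * (n:ℝ) + (-(lam * β * Int.fract g))) := dni_add_le _ _
      _ ≤ distNearestInt (lam^2 * β * α) + (distNearestInt (lam * β * (n:ℝ)) + distNearestInt (-(lam * β * Int.fract g))) := by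
            linarith [dni_add_le (lam * β * (n:ℝ)) (-(lam * β * Int.fract g))]
      _ < η + (η + M * β) := by
            have h5 : distNearestInt (-(lam * β * Int.fract g)) ≤ M * β := by
              rw [dni_neg]
              refine (dni_le_abs _).trans ?_
              rw [abs_mul, abs_mul, _root_.abs_of_nonneg hβ0.le, _root_.abs_of_nonneg hfr0]
              have h6 : |lam| * β ≤ M * β := mul_le_mul_of_nonneg_right hMlam hβ0.le
              have h7 : |lam| * β * Int.fract g ≤ M * β * Int.fract g :=
                mul_le_mul_of_nonneg_right h6 hfr0
              have h8 : M * β * Int.fract g ≤ M * β * 1 :=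
                mul_le_mul_of_nonneg_left hfr1.le (by positivity)
              linarith
            linarith [ht3, hb2]
      _ ≤ 2 * (δ - ε) := by rw [h2δε]; nlinarith
    obtain ⟨m, m', hm, hm', heq⟩ := main K hCK hDK
    exact ⟨m, m', hm, hm', heq⟩
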